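/- In the two-patch setting, let α₁, α₂, β₁, β₂ : [0,1] → ℝ be C¹ with α₁(ξ)α₂(ξ) > 0 for all ξ, set β = α₁β₂ + α₂β₁, and assume the geometric gluing identity α₁(ξ)∂₂F⁽²⁾(ξ,0) + α₂(ξ)∂₁F⁽¹⁾(0,ξ) + β(ξ)∂₂F⁽¹⁾(0,ξ) = 0 for all ξ ∈ [0,1]. Let b : [0,1] → ℝ be C², let B, c₀, c₁, d : [0,1] → ℝ be C¹ with c₀(0) = 1, c₀′(0) = 0, c₁(0) = 0, c₁′(0) = 1, d(0) = 0, and define f⁽¹⁾(ξ₁,ξ₂) = b(ξ₂)c₀(ξ₁) − β₁(ξ₂)b′(ξ₂)c₁(ξ₁) + α₁(ξ₂)B(ξ₂)d(ξ₁) and f⁽²⁾(ξ₁,ξ₂) = b(ξ₁)c₀(ξ₂) − β₂(ξ₁)b′(ξ₁)c₁(ξ₂) − α₂(ξ₁)B(ξ₁)d(ξ₂). Then f⁽¹⁾(0,ξ) = f⁽²⁾(ξ,0) for all ξ ∈ [0,1], so there is a unique function φ on F⁽¹⁾([0,1]²) ∪ F⁽²⁾([0,1]²) with φ ∘ F⁽ⁱ⁾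 = f⁽ⁱ⁾ for i = 1, 2, and this φ is continuously differentiable on Ω. -/

import Mathlib

/-- The determinant of the 2×2 matrix with columns `a` and `b`. -/
def det2 (a b : ℝ × ℝ) : ℝ := a.1 * b.2 - a.2 * b.1

/-- Partial derivative with respect to the first argument. -/
noncomputable def pd1 {E : Type*} [NormedAddCommGroup E] [NormedSpace ℝ E]
    (f : ℝ × ℝ → E) (x : ℝ × ℝ) : E := deriv (fun s => f (s, x.2)) x.1

/-- Partial derivative with respect to the second argument. -/
noncomputable def pd2 {E : Type*} [NormedAddCommGroup E] [NormedSpace ℝ E]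
    (f : ℝ × ℝ → E) (x : ℝ × ℝ) : E := deriv (fun s => f (x.1, s)) x.2

/-- The unit square `[0,1]²` in `ℝ²`. -/
def square : Set (ℝ × ℝ) := Set.Icc (0:ℝ) 1 ×ˢ Set.Icc (0:ℝ) 1

open Set Filter Topology Asymptotics

noncomputable section

namespace Stmt9

/-- The continuous linear map `ℝ² → ℝ²` with columns `a`, `b`. -/
def mk2 (a b : ℝ × ℝ) : (ℝ × ℝ) →L[ℝ] (ℝ × ℝ) :=
  (ContinuousLinearMap.fst ℝ ℝ ℝ).smulRight a + (ContinuousLinearMap.snd ℝ ℝ ℝ).smulRight b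

lemma mk2_apply (a b v : ℝ × ℝ) : mk2 a b v = v.1 • a + v.2 • b := rfl

/-- Explicit inverse of `mk2 a b` when the determinant is nonzero. -/
def invmk (a b : ℝ × ℝ) : (ℝ × ℝ) →L[ℝ] (ℝ × ℝ) :=
  mk2 (b.2 / det2 a b, -(a.2) / det2 a b) (-(b.1) / det2 a b, a.1 / det2 a b)

lemma invmk_left (a b : ℝ × ℝ) (h : det2 a b ≠ 0) (w : ℝ × ℝ) :
    invmk a b (mk2 a b w) = w := by
  have hΔ : a.1 * b.2 - a.2 * b.1 ≠ 0 := h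
  simp only [invmk, mk2_apply, Prod.smul_mk, Prod.mk_add_mk, smul_eq_mul, Prod.smul_fst,
    Prod.smul_snd, Prod.fst_add, Prod.snd_add]
  ext <;> field_simp <;> simp only [det2] <;> ring

lemma invmk_right (a b : ℝ × ℝ) (h : det2 a b ≠ 0) (w : ℝ × ℝ) :
    mk2 a b (invmk a b w) = w := by
  have hΔ : a.1 * b.2 - a.2 * b.1 ≠ 0 := h
  simp only [invmk, mk2_apply, Prod.smul_fst, Prod.smul_snd, smul_eq_mul, Prod.fst_add,
    Prod.snd_add]
  ext <;> simp only [Prod.fst_add, Prod.snd_add, Prod.smul_fst, Prod.smul_snd, smul_eq_mul] <;>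
    field_simp <;> simp only [det2] <;> ring

/-- Any continuous linear map `ℝ² → ℝ²` is `mk2` of its columns. -/
lemma clm_eq_mk2 {E : Type*} [NormedAddCommGroup E] [NormedSpace ℝ E]
    (M : (ℝ × ℝ) →L[ℝ] E) (v : ℝ × ℝ) :
    M v = v.1 • M (1, 0) + v.2 • M (0, 1) := by
  have : v = v.1 • ((1:ℝ), (0:ℝ)) + v.2 • ((0:ℝ), (1:ℝ)) := by
    ext <;> simp
  conv_lhs => rw [this]
  rw [map_add, map_smul, map_smul]

lemma mk2_columns (M : (ℝ × ℝ) →L[ℝ] (ℝ × ℝ)) : mk2 (M (1, 0)) (M (0, 1)) = M :=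
  ContinuousLinearMap.ext fun v => (mk2_apply _ _ v).trans (clm_eq_mk2 M v).symm

lemma hasDerivAt_sect1 {E : Type*} [NormedAddCommGroup E] [NormedSpace ℝ E]
    {f : ℝ × ℝ → E} {x : ℝ × ℝ} {L : (ℝ × ℝ) →L[ℝ] E} (h : HasFDerivAt f L x) :
    HasDerivAt (fun s => f (s, x.2)) (L (1, 0)) x.1 := by
  have h1 : HasDerivAt (fun s : ℝ => (s, x.2)) ((1:ℝ), (0:ℝ)) x.1 :=
    (hasDerivAt_id x.1).prodMk (hasDerivAt_const x.1 x.2)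
  have h2 : HasFDerivAt f L ((fun s : ℝ => (s, x.2)) x.1) := by simpa using h
  exact h2.comp_hasDerivAt x.1 h1

lemma hasDerivAt_sect2 {E : Type*} [NormedAddCommGroup E] [NormedSpace ℝ E]
    {f : ℝ × ℝ → E} {x : ℝ × ℝ} {L : (ℝ × ℝ) →L[ℝ] E} (h : HasFDerivAt f L x) :
    HasDerivAt (fun s => f (x.1, s)) (L (0, 1)) x.2 := by
  have h1 : HasDerivAt (fun s : ℝ => (x.1, s)) ((0:ℝ), (1:ℝ)) x.2 :=
    (hasDerivAt_const x.2 x.1).prodMk (hasDerivAt_id x.2)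
  have h2 : HasFDerivAt f L ((fun s : ℝ => (x.1, s)) x.2) := by simpa using h
  exact h2.comp_hasDerivAt x.2 h1

lemma pd1_eq {E : Type*} [NormedAddCommGroup E] [NormedSpace ℝ E]
    {f : ℝ × ℝ → E} {x : ℝ × ℝ} {L : (ℝ × ℝ) →L[ℝ] E} (h : HasFDerivAt f L x) :
    pd1 f x = L (1, 0) := (hasDerivAt_sect1 h).deriv

lemma pd2_eq {E : Type*} [NormedAddCommGroup E] [NormedSpace ℝ E]
    {f : ℝ × ℝ → E} {x : ℝ × ℝ} {L : (ℝ × ℝ) →L[ℝ] E} (h : HasFDerivAt f L x) :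
    pd2 f x = L (0, 1) := (hasDerivAt_sect2 h).deriv

/-- Two continuous linear functionals on `ℝ²` agreeing on a basis are equal. -/
lemma clm_ext_of_basis {L1 L2 : (ℝ × ℝ) →L[ℝ] ℝ} {u t : ℝ × ℝ}
    (hdet : det2 u t ≠ 0) (hu : L1 u = L2 u) (ht : L1 t = L2 t) : L1 = L2 := by
  apply ContinuousLinearMap.ext
  intro w
  have hΔ : u.1 * t.2 - u.2 * t.1 ≠ 0 := hdet
  have hw : w = ((w.1 * t.2 - w.2 * t.1) / det2 u t) • u
      + ((u.1 * w.2 - u.2 * w.1) / det2 u t) • t := by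
    ext <;> simp only [Prod.fst_add, Prod.snd_add, Prod.smul_fst, Prod.smul_snd,
      smul_eq_mul] <;> field_simp <;> simp only [det2] <;> ring
  rw [hw, map_add, map_smul, map_smul, map_add, map_smul, map_smul, hu, ht]

end Stmt9
namespace Stmt9

open Set Filter Topology

/-- Local inverse package for a patch map. -/
lemma patch_local {F : ℝ × ℝ → ℝ × ℝ} {U : Set (ℝ × ℝ)} (hU : IsOpen U)
    (hsqU : square ⊆ U) (hF : ContDiffOn ℝ 1 F U) (hinj : Set.InjOn F square)
    (hjac : ∀ x ∈ square, det2 (pd1 F x) (pd2 F x) ≠ 0)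
    {x : ℝ × ℝ} (hx : x ∈ square) :
    ∃ (W : Set (ℝ × ℝ)) (g : ℝ × ℝ → ℝ × ℝ), IsOpen W ∧ F x ∈ W ∧
      ContDiffOn ℝ 1 g W ∧ (∀ z ∈ W, F (g z) = z) ∧
      (∀ z ∈ W, z ∈ F '' square → g z ∈ square) := by
  have hsq : IsCompact square := (isCompact_Icc).prod isCompact_Icc
  have hxU : x ∈ U := hsqU hx
  have hFx : ContDiffAt ℝ 1 F x := hF.contDiffAt (hU.mem_nhds hxU)
  have hdF : DifferentiableAt ℝ F x := hFx.differentiableAt one_ne_zero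
  set M : (ℝ × ℝ) →L[ℝ] (ℝ × ℝ) := fderiv ℝ F x with hM
  have hMF : HasFDerivAt F M x := hdF.hasFDerivAt
  have hdet : det2 (M (1, 0)) (M (0, 1)) ≠ 0 := by
    rw [← pd1_eq hMF, ← pd2_eq hMF]; exact hjac x hx
  set A : (ℝ × ℝ) ≃L[ℝ] (ℝ × ℝ) :=
    ContinuousLinearEquiv.equivOfInverse M (invmk (M (1, 0)) (M (0, 1)))
      (fun w => by
        have h := invmk_left (M (1, 0)) (M (0, 1)) hdet w
        rwa [mk2_columns M] at h)
      (fun w => by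
        have h := invmk_right (M (1, 0)) (M (0, 1)) hdet w
        rwa [mk2_columns M] at h) with hA
  have hAF : HasFDerivAt F (A : (ℝ × ℝ) →L[ℝ] (ℝ × ℝ)) x := hMF
  set g : ℝ × ℝ → ℝ × ℝ := hFx.localInverse hAF one_ne_zero with hg
  have hright : ∀ᶠ z in 𝓝 (F x), F (g z) = z :=
    (hFx.hasStrictFDerivAt' hAF one_ne_zero).eventually_right_inverse
  have hleft : ∀ᶠ w in 𝓝 x, g (F w) = w :=
    (hFx.hasStrictFDerivAt' hAF one_ne_zero).eventually_left_inverse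
  have hgC : ContDiffAt ℝ 1 g (F x) := hFx.to_localInverse hAF one_ne_zero
  obtain ⟨V, hV, hgV⟩ := hgC.contDiffOn le_rfl (by simp)
  obtain ⟨δ, hδ, hδball⟩ := Metric.eventually_nhds_iff.1 hleft
  -- the compact set of far points
  have hKc : IsCompact (F '' (square \ Metric.ball x δ)) := by
    apply IsCompact.image_of_continuousOn
    · exact hsq.diff Metric.isOpen_ball
    · exact (hF.continuousOn).mono (fun w hw => hsqU hw.1)
  have hFxK : F x ∉ F '' (square \ Metric.ball x δ) := by
    rintro ⟨w, ⟨hw1, hw2⟩, hw3⟩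
    exact hw2 (by simpa [Metric.mem_ball] using (by rw [hinj hw1 hx hw3] : dist w x < δ ↔ dist x x < δ).2 (by simp [hδ]))
  set W : Set (ℝ × ℝ) :=
    interior (V ∩ {z | F (g z) = z}) ∩ (F '' (square \ Metric.ball x δ))ᶜ with hW
  refine ⟨W, g, ?_, ?_, ?_, ?_, ?_⟩
  · exact isOpen_interior.inter hKc.isClosed.isOpen_compl
  · refine ⟨mem_interior_iff_mem_nhds.2 ?_, hFxK⟩
    exact Filter.inter_mem hV hright
  · exact (hgV.mono (fun z hz => (interior_subset hz.1).1))
  · exact fun z hz => (interior_subset hz.1).2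
  · rintro z hz ⟨w, hwsq, hwz⟩
    have hwball : w ∈ Metric.ball x δ := by
      by_contra hwb
      exact hz.2 ⟨w, ⟨hwsq, hwb⟩, hwz⟩
    have : g (F w) = w := hδball (by simpa [Metric.mem_ball] using hwball)
    rw [← hwz, this]; exact hwsq

end Stmt9
namespace Stmt9

open Set Filter Topology Asymptotics

/-- Derivative of `f ∘ g` evaluated on the columns of the Jacobian of `F`, where `g` is a
local right inverse of `F`. -/
lemma fderiv_comp_localInv {f : ℝ × ℝ → ℝ} (hf : ContDiff ℝ 1 f)
    {g F : ℝ × ℝ → ℝ × ℝ} {W : Set (ℝ × ℝ)} (hW : IsOpen W)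
    (hg : ContDiffOn ℝ 1 g W) (hFg : ∀ z ∈ W, F (g z) = z)
    {z : ℝ × ℝ} (hz : z ∈ W) (hFd : DifferentiableAt ℝ F (g z))
    (hdet : det2 (pd1 F (g z)) (pd2 F (g z)) ≠ 0) :
    fderiv ℝ (f ∘ g) z (pd1 F (g z)) = pd1 f (g z) ∧
    fderiv ℝ (f ∘ g) z (pd2 F (g z)) = pd2 f (g z) := by
  have hgd : DifferentiableAt ℝ g z :=
    (hg.contDiffAt (hW.mem_nhds hz)).differentiableAt one_ne_zero
  set x₀ := g z with hx₀
  set M : (ℝ × ℝ) →L[ℝ] (ℝ × ℝ) := fderiv ℝ F x₀ with hM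
  have hMF : HasFDerivAt F M x₀ := hFd.hasFDerivAt
  have ha : pd1 F x₀ = M (1, 0) := pd1_eq hMF
  have hb : pd2 F x₀ = M (0, 1) := pd2_eq hMF
  have hdet' : det2 (M (1, 0)) (M (0, 1)) ≠ 0 := by rwa [ha, hb] at hdet
  set P : (ℝ × ℝ) →L[ℝ] (ℝ × ℝ) := fderiv ℝ g z with hP
  -- F ∘ g = id near z
  have hev : (F ∘ g) =ᶠ[𝓝 z] id := by
    filter_upwards [hW.mem_nhds hz] with w hw
    exact hFg w hw
  have hMP : M.comp P = ContinuousLinearMap.id ℝ (ℝ × ℝ) := by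
    have h1 : fderiv ℝ (F ∘ g) z = M.comp P := fderiv_comp (x := z) hFd hgd
    have h2 : fderiv ℝ (F ∘ g) z = fderiv ℝ (id : ℝ × ℝ → ℝ × ℝ) z := hev.fderiv_eq
    rw [← h1, h2, fderiv_id]
  set N := invmk (M (1, 0)) (M (0, 1)) with hN
  have hNM : ∀ w, N (M w) = w := fun w => by
    have h := invmk_left (M (1, 0)) (M (0, 1)) hdet' w
    rwa [mk2_columns M] at h
  have hPN : ∀ w, P w = N w := by
    intro w
    have : M (P w) = w := by
      have h2 := ContinuousLinearMap.ext_iff.1 hMP w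
      simpa using h2
    calc P w = N (M (P w)) := (hNM (P w)).symm
    _ = N w := by rw [this]
  have hfd : DifferentiableAt ℝ f x₀ := (hf.differentiable one_ne_zero) x₀
  have hchain : fderiv ℝ (f ∘ g) z = (fderiv ℝ f x₀).comp P := fderiv_comp (x := z) hfd hgd
  have hNa : N (M (1, 0)) = (1, 0) := hNM (1, 0)
  have hNb : N (M (0, 1)) = (0, 1) := hNM (0, 1)
  have hf1 : pd1 f x₀ = fderiv ℝ f x₀ (1, 0) := pd1_eq hfd.hasFDerivAt
  have hf2 : pd2 f x₀ = fderiv ℝ f x₀ (0, 1) := pd2_eq hfd.hasFDerivAt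
  constructor
  · rw [hchain, ha]
    simp only [ContinuousLinearMap.comp_apply]
    rw [hPN, hNa, hf1]
  · rw [hchain, hb]
    simp only [ContinuousLinearMap.comp_apply]
    rw [hPN, hNb, hf2]

/-- Gluing two C¹ functions along closed sets with matching values and derivatives. -/
lemma glueC1 {A Bs W : Set (ℝ × ℝ)} (hA : IsClosed A) (hB : IsClosed Bs) (hW : IsOpen W)
    (hcov : W ⊆ A ∪ Bs) {φ h k : ℝ × ℝ → ℝ}
    (hh : ContDiffOn ℝ 1 h W) (hk : ContDiffOn ℝ 1 k W)
    (hφA : ∀ z ∈ W ∩ A, φ z = h z) (hφB : ∀ z ∈ W ∩ Bs, φ z = k z)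
    (hmatch : ∀ z ∈ W ∩ (A ∩ Bs), h z = k z ∧ fderiv ℝ h z = fderiv ℝ k z) :
    ContDiffOn ℝ 1 φ W := by
  classical
  set L : ℝ × ℝ → (ℝ × ℝ) →L[ℝ] ℝ := fun z => if z ∈ A then fderiv ℝ h z else fderiv ℝ k z
    with hL
  have hhd : ∀ z ∈ W, HasFDerivAt h (fderiv ℝ h z) z := fun z hz =>
    ((hh.contDiffAt (hW.mem_nhds hz)).differentiableAt one_ne_zero).hasFDerivAt
  have hkd : ∀ z ∈ W, HasFDerivAt k (fderiv ℝ k z) z := fun z hz =>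
    ((hk.contDiffAt (hW.mem_nhds hz)).differentiableAt one_ne_zero).hasFDerivAt
  have key : ∀ z ∈ W, HasFDerivAt φ (L z) z := by
    intro z hz
    by_cases hzA : z ∈ A
    · by_cases hzB : z ∈ Bs
      · -- both: use little-o estimate
        obtain ⟨hhk, hDhk⟩ := hmatch z ⟨hz, hzA, hzB⟩
        have hLz : L z = fderiv ℝ h z := by simp only [hL]; exact if_pos hzA
        rw [hasFDerivAt_iff_isLittleO_nhds_zero] at *
        have o1 := (hasFDerivAt_iff_isLittleO_nhds_zero.1 (hhd z hz))
        have o2 := (hasFDerivAt_iff_isLittleO_nhds_zero.1 (hkd z hz))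
        rw [isLittleO_iff] at o1 o2 ⊢
        intro c hc
        have hWev : ∀ᶠ w : ℝ × ℝ in 𝓝 0, z + w ∈ W := by
          have : Tendsto (fun w : ℝ × ℝ => z + w) (𝓝 0) (𝓝 z) := by
            simpa using (continuous_add_left z).tendsto (0 : ℝ × ℝ)
          exact this.eventually (hW.eventually_mem hz)
        filter_upwards [o1 hc, o2 hc, hWev] with w h1 h2 h3
        rcases hcov h3 with hwA | hwB
        · rw [hLz]
          have e1 : φ (z + w) = h (z + w) := hφA _ ⟨h3, hwA⟩
          have e2 : φ z = h z := hφA _ ⟨hz, hzA⟩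
          rw [e1, e2]; exact h1
        · have e1 : φ (z + w) = k (z + w) := hφB _ ⟨h3, hwB⟩
          have e2 : φ z = k z := hφB _ ⟨hz, hzB⟩
          rw [e1, e2, hLz, hDhk]; exact h2
      · -- only A near z
        have hLz : L z = fderiv ℝ h z := (by simp only [hL]; exact if_pos hzA)
        rw [hLz]
        apply (hhd z hz).congr_of_eventuallyEq
        have : W ∩ Bsᶜ ∈ 𝓝 z := (hW.inter hB.isOpen_compl).mem_nhds ⟨hz, hzB⟩
        filter_upwards [this] with w ⟨hw1, hw2⟩
        exact hφA _ ⟨hw1, (hcov hw1).resolve_right hw2⟩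
    · -- z ∉ A, so z ∈ Bs
      have hzB : z ∈ Bs := (hcov hz).resolve_left hzA
      have hLz : L z = fderiv ℝ k z := (by simp only [hL]; exact if_neg hzA)
      rw [hLz]
      apply (hkd z hz).congr_of_eventuallyEq
      have : W ∩ Aᶜ ∈ 𝓝 z := (hW.inter hA.isOpen_compl).mem_nhds ⟨hz, hzA⟩
      filter_upwards [this] with w ⟨hw1, hw2⟩
      exact hφB _ ⟨hw1, (hcov hw1).resolve_left hw2⟩
  -- continuity of L on W
  have hch : ContinuousOn (fderiv ℝ h) W := hh.continuousOn_fderiv_of_isOpen hW le_rfl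
  have hck : ContinuousOn (fderiv ℝ k) W := hk.continuousOn_fderiv_of_isOpen hW le_rfl
  have hLcont : ∀ z ∈ W, ContinuousAt L z := by
    intro z hz
    have hchz : ContinuousAt (fderiv ℝ h) z := hch.continuousAt (hW.mem_nhds hz)
    have hckz : ContinuousAt (fderiv ℝ k) z := hck.continuousAt (hW.mem_nhds hz)
    by_cases hzA : z ∈ A
    · by_cases hzB : z ∈ Bs
      · obtain ⟨_, hDhk⟩ := hmatch z ⟨hz, hzA, hzB⟩
        have hLz : L z = fderiv ℝ h z := (by simp only [hL]; exact if_pos hzA)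
        unfold ContinuousAt
        rw [hLz]
        have hsplit : (𝓝 z : Filter (ℝ × ℝ)) = 𝓝[A] z ⊔ 𝓝[Aᶜ] z := by
          rw [← nhdsWithin_univ, ← Set.union_compl_self A, nhdsWithin_union]
        rw [hsplit]
        refine Tendsto.sup ?_ ?_
        · refine Tendsto.congr' ?_ (hchz.continuousWithinAt (s := A)).tendsto
          filter_upwards [self_mem_nhdsWithin] with w hw
          simp only [hL]; exact (if_pos hw).symm
        · have : Tendsto (fderiv ℝ k) (𝓝[Aᶜ] z) (𝓝 (fderiv ℝ h z)) := by
            rw [hDhk]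
            exact (hckz.continuousWithinAt (s := Aᶜ)).tendsto
          refine Tendsto.congr' ?_ this
          filter_upwards [self_mem_nhdsWithin] with w hw
          simp only [hL]; exact (if_neg hw).symm
      · have : W ∩ Bsᶜ ∈ 𝓝 z := (hW.inter hB.isOpen_compl).mem_nhds ⟨hz, hzB⟩
        apply hchz.congr
        filter_upwards [this] with w ⟨hw1, hw2⟩
        simp only [hL]; exact (if_pos ((hcov hw1).resolve_right hw2)).symm
    · have : Aᶜ ∈ 𝓝 z := hA.isOpen_compl.mem_nhds hzA
      apply hckz.congr
      filter_upwards [this] with w hw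
      simp only [hL]; exact (if_neg hw).symm
  -- conclude
  have hdiff : DifferentiableOn ℝ φ W := fun z hz =>
    ((key z hz).differentiableAt).differentiableWithinAt
  rw [show (1 : WithTop ℕ∞) = 0 + 1 from rfl, contDiffOn_succ_iff_fderiv_of_isOpen hW]
  refine ⟨hdiff, by simp, ?_⟩
  rw [contDiffOn_zero]
  have : ∀ z ∈ W, fderiv ℝ φ z = L z := fun z hz => (key z hz).fderiv
  exact ContinuousOn.congr (fun z hz => (hLcont z hz).continuousWithinAt) this

end Stmt9
namespace Stmt9

lemma deriv_combo {c₀ c₁ d : ℝ → ℝ} {s : ℝ} (hc₀ : DifferentiableAt ℝ c₀ s)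
    (hc₁ : DifferentiableAt ℝ c₁ s) (hd : DifferentiableAt ℝ d s) (p q r : ℝ) :
    deriv (fun s => p * c₀ s - q * c₁ s + r * d s) s
      = p * deriv c₀ s - q * deriv c₁ s + r * deriv d s :=
  (((hc₀.hasDerivAt.const_mul p).sub (hc₁.hasDerivAt.const_mul q)).add
    (hd.hasDerivAt.const_mul r)).deriv

lemma deriv_combo' {c₀ c₁ d : ℝ → ℝ} {s : ℝ} (hc₀ : DifferentiableAt ℝ c₀ s)
    (hc₁ : DifferentiableAt ℝ c₁ s) (hd : DifferentiableAt ℝ d s) (p q r : ℝ) :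
    deriv (fun s => p * c₀ s - q * c₁ s - r * d s) s
      = p * deriv c₀ s - q * deriv c₁ s - r * deriv d s :=
  (((hc₀.hasDerivAt.const_mul p).sub (hc₁.hasDerivAt.const_mul q)).sub
    (hd.hasDerivAt.const_mul r)).deriv

end Stmt9

/-- In the two-patch setting with AS-G¹-type gluing data, the pullbacks of a general
element of the edge function space (combination of a trace-type and a
cross-derivative-type edge function) agree on the interface, so they define a unique
function `φ` on `F⁽¹⁾([0,1]²) ∪ F⁽²⁾([0,1]²)`, and `φ` is continuously differentiable
on `Ω`. -/
theorem stmt9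
    (F1 F2 : ℝ × ℝ → ℝ × ℝ) (U1 U2 : Set (ℝ × ℝ))
    (hU1 : IsOpen U1) (hU2 : IsOpen U2) (hsqU1 : square ⊆ U1) (hsqU2 : square ⊆ U2)
    (hF1 : ContDiffOn ℝ 1 F1 U1) (hF2 : ContDiffOn ℝ 1 F2 U2)
    (hinj1 : Set.InjOn F1 square) (hinj2 : Set.InjOn F2 square)
    (hjac1 : ∀ x ∈ square, 0 < det2 (pd1 F1 x) (pd2 F1 x))
    (hjac2 : ∀ x ∈ square, 0 < det2 (pd1 F2 x) (pd2 F2 x))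
    (hcompat : ∀ ξ ∈ Set.Icc (0:ℝ) 1, F1 (0, ξ) = F2 (ξ, 0))
    (hinter : F1 '' square ∩ F2 '' square = F1 '' (({0} : Set ℝ) ×ˢ Set.Icc (0:ℝ) 1))
    (Ω : Set (ℝ × ℝ)) (hΩ : Ω = interior (F1 '' square ∪ F2 '' square))
    (hΩedge : ∀ ξ ∈ Set.Ioo (0:ℝ) 1, F1 (0, ξ) ∈ Ω)
    (α₁ α₂ β₁ β₂ : ℝ → ℝ)
    (hα₁ : ContDiff ℝ 1 α₁) (hα₂ : ContDiff ℝ 1 α₂)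
    (hβ₁ : ContDiff ℝ 1 β₁) (hβ₂ : ContDiff ℝ 1 β₂)
    (hsign : ∀ ξ ∈ Set.Icc (0:ℝ) 1, 0 < α₁ ξ * α₂ ξ)
    (β : ℝ → ℝ) (hβ : β = fun ξ => α₁ ξ * β₂ ξ + α₂ ξ * β₁ ξ)
    (hglueF : ∀ ξ ∈ Set.Icc (0:ℝ) 1,
      α₁ ξ • pd2 F2 (ξ, 0) + α₂ ξ • pd1 F1 (0, ξ) + β ξ • pd2 F1 (0, ξ) = 0)
    (b : ℝ → ℝ) (hb : ContDiff ℝ 2 b)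
    (B c₀ c₁ d : ℝ → ℝ)
    (hB : ContDiff ℝ 1 B) (hc₀ : ContDiff ℝ 1 c₀) (hc₁ : ContDiff ℝ 1 c₁)
    (hd : ContDiff ℝ 1 d)
    (hc₀0 : c₀ 0 = 1) (hc₀'0 : deriv c₀ 0 = 0)
    (hc₁0 : c₁ 0 = 0) (hc₁'0 : deriv c₁ 0 = 1) (hd0 : d 0 = 0)
    (f1 f2 : ℝ × ℝ → ℝ)
    (hf1 : f1 = fun ξ =>
      b ξ.2 * c₀ ξ.1 - β₁ ξ.2 * deriv b ξ.2 * c₁ ξ.1 + α₁ ξ.2 * B ξ.2 * d ξ.1)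
    (hf2 : f2 = fun ξ =>
      b ξ.1 * c₀ ξ.2 - β₂ ξ.1 * deriv b ξ.1 * c₁ ξ.2 - α₂ ξ.1 * B ξ.1 * d ξ.2) :
    (∀ ξ ∈ Set.Icc (0:ℝ) 1, f1 (0, ξ) = f2 (ξ, 0)) ∧
    (∃ φ : ℝ × ℝ → ℝ, ∀ x ∈ square, φ (F1 x) = f1 x ∧ φ (F2 x) = f2 x) ∧
    (∀ φ ψ : ℝ × ℝ → ℝ,
      (∀ x ∈ square, φ (F1 x) = f1 x ∧ φ (F2 x) = f2 x) →
      (∀ x ∈ square, ψ (F1 x) = f1 x ∧ ψ (F2 x) = f2 x) →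
      Set.EqOn φ ψ (F1 '' square ∪ F2 '' square)) ∧
    (∀ φ : ℝ × ℝ → ℝ,
      (∀ x ∈ square, φ (F1 x) = f1 x ∧ φ (F2 x) = f2 x) →
      ContDiffOn ℝ 1 φ Ω) := by
  classical
  open Set Filter Topology Stmt9 in
  -- basic smoothness facts
  have hb1 : ContDiff ℝ 1 b := hb.of_le (by norm_num)
  have hb'1 : ContDiff ℝ 1 (deriv b) := by
    have h2 : ContDiff ℝ (1 + 1) b := by exact_mod_cast hb
    exact (contDiff_succ_iff_deriv.mp h2).2.2
  have hf1s : ContDiff ℝ 1 f1 := by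
    rw [hf1]
    exact (((hb1.comp contDiff_snd).mul (hc₀.comp contDiff_fst)).sub
      (((hβ₁.comp contDiff_snd).mul (hb'1.comp contDiff_snd)).mul
        (hc₁.comp contDiff_fst))).add
      (((hα₁.comp contDiff_snd).mul (hB.comp contDiff_snd)).mul (hd.comp contDiff_fst))
  have hf2s : ContDiff ℝ 1 f2 := by
    rw [hf2]
    exact (((hb1.comp contDiff_fst).mul (hc₀.comp contDiff_snd)).sub
      (((hβ₂.comp contDiff_fst).mul (hb'1.comp contDiff_fst)).mul
        (hc₁.comp contDiff_snd))).sub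
      (((hα₂.comp contDiff_fst).mul (hB.comp contDiff_fst)).mul (hd.comp contDiff_snd))
  -- the trace agreement
  have htrace : ∀ ξ ∈ Set.Icc (0:ℝ) 1, f1 (0, ξ) = f2 (ξ, 0) := by
    intro ξ _
    simp only [hf1, hf2]
    rw [hc₀0, hc₁0, hd0]
    ring
  have hf1val : ∀ ξ : ℝ, f1 (0, ξ) = b ξ := by
    intro ξ
    simp only [hf1]
    rw [hc₀0, hc₁0, hd0]
    ring
  -- membership facts
  have hmem1 : ∀ ξ ∈ Set.Icc (0:ℝ) 1, ((0:ℝ), ξ) ∈ square := fun ξ hξ =>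
    ⟨Set.left_mem_Icc.2 zero_le_one, hξ⟩
  have hmem2 : ∀ ξ ∈ Set.Icc (0:ℝ) 1, (ξ, (0:ℝ)) ∈ square := fun ξ hξ =>
    ⟨hξ, Set.left_mem_Icc.2 zero_le_one⟩
  -- the glued function
  set S1 := F1 '' square with hS1
  set S2 := F2 '' square with hS2def
  have hΓ : ∀ z, z ∈ S1 → z ∈ S2 → ∃ ξ ∈ Set.Icc (0:ℝ) 1, z = F1 (0, ξ) := by
    intro z h1 h2
    have hz : z ∈ F1 '' (({0} : Set ℝ) ×ˢ Set.Icc (0:ℝ) 1) := hinter ▸ ⟨h1, h2⟩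
    rcases hz with ⟨p, ⟨hp1, hp2⟩, rfl⟩
    refine ⟨p.2, hp2, ?_⟩
    have : p = (0, p.2) := by
      ext
      · exact hp1
      · rfl
    rw [← this]
  set φ0 : ℝ × ℝ → ℝ := fun y =>
    if y ∈ S1 then f1 (Function.invFunOn F1 square y)
    else if y ∈ S2 then f2 (Function.invFunOn F2 square y) else 0 with hφ0
  have hφ0spec : ∀ x ∈ square, φ0 (F1 x) = f1 x ∧ φ0 (F2 x) = f2 x := by
    intro x hx
    constructor
    · have hmem : F1 x ∈ S1 := ⟨x, hx, rfl⟩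
      have hex : ∃ a ∈ square, F1 a = F1 x := ⟨x, hx, rfl⟩
      have h1 : Function.invFunOn F1 square (F1 x) ∈ square := Function.invFunOn_mem hex
      have h2 : F1 (Function.invFunOn F1 square (F1 x)) = F1 x := Function.invFunOn_eq hex
      have h3 : Function.invFunOn F1 square (F1 x) = x := hinj1 h1 hx h2
      simp only [hφ0, if_pos hmem, h3]
    · by_cases hmem : F2 x ∈ S1
      · obtain ⟨ξ, hξ, hzeq⟩ := hΓ (F2 x) hmem ⟨x, hx, rfl⟩
        have hx2 : x = (ξ, 0) := hinj2 hx (hmem2 ξ hξ) (by rw [← hcompat ξ hξ, ← hzeq])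
        have hex : ∃ a ∈ square, F1 a = F2 x := ⟨(0, ξ), hmem1 ξ hξ, hzeq.symm⟩
        have h1 : Function.invFunOn F1 square (F2 x) ∈ square := Function.invFunOn_mem hex
        have h2 : F1 (Function.invFunOn F1 square (F2 x)) = F2 x := Function.invFunOn_eq hex
        have h3 : Function.invFunOn F1 square (F2 x) = (0, ξ) :=
          hinj1 h1 (hmem1 ξ hξ) (by rw [h2, hzeq])
        simp only [hφ0, if_pos hmem, h3]
        rw [htrace ξ hξ, hx2]
      · have hmem' : F2 x ∈ S2 := ⟨x, hx, rfl⟩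
        have hex : ∃ a ∈ square, F2 a = F2 x := ⟨x, hx, rfl⟩
        have h1 : Function.invFunOn F2 square (F2 x) ∈ square := Function.invFunOn_mem hex
        have h2 : F2 (Function.invFunOn F2 square (F2 x)) = F2 x := Function.invFunOn_eq hex
        have h3 : Function.invFunOn F2 square (F2 x) = x := hinj2 h1 hx h2
        simp only [hφ0, if_neg hmem, if_pos hmem', h3]
  refine ⟨htrace, ⟨φ0, hφ0spec⟩, ?_, ?_⟩
  · -- uniqueness
    rintro φ ψ hφ hψ y (⟨x, hx, rfl⟩ | ⟨x, hx, rfl⟩)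
    · exact ((hφ x hx).1).trans ((hψ x hx).1).symm
    · exact ((hφ x hx).2).trans ((hψ x hx).2).symm
  · -- smoothness
    intro φ hφp
    have hΩopen : IsOpen Ω := by rw [hΩ]; exact isOpen_interior
    have hΩsub : Ω ⊆ S1 ∪ S2 := by rw [hΩ]; exact interior_subset
    have hsqcomp : IsCompact square := isCompact_Icc.prod isCompact_Icc
    have hS1cl : IsClosed S1 :=
      (hsqcomp.image_of_continuousOn (hF1.continuousOn.mono hsqU1)).isClosed
    have hS2cl : IsClosed S2 :=
      (hsqcomp.image_of_continuousOn (hF2.continuousOn.mono hsqU2)).isClosed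
    have hjac1' : ∀ x ∈ square, det2 (pd1 F1 x) (pd2 F1 x) ≠ 0 :=
      fun x hx => ne_of_gt (hjac1 x hx)
    have hjac2' : ∀ x ∈ square, det2 (pd1 F2 x) (pd2 F2 x) ≠ 0 :=
      fun x hx => ne_of_gt (hjac2 x hx)
    have hα₂ne : ∀ ξ ∈ Set.Icc (0:ℝ) 1, α₂ ξ ≠ 0 := by
      intro ξ hξ h
      simpa [h] using hsign ξ hξ
    -- partial derivative values of the edge functions
    have hc₀d : ∀ s : ℝ, DifferentiableAt ℝ c₀ s := fun s => (hc₀.differentiable one_ne_zero) s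
    have hc₁d : ∀ s : ℝ, DifferentiableAt ℝ c₁ s := fun s => (hc₁.differentiable one_ne_zero) s
    have hdd : ∀ s : ℝ, DifferentiableAt ℝ d s := fun s => (hd.differentiable one_ne_zero) s
    have hpd1f1 : ∀ ξ : ℝ, pd1 f1 (0, ξ) = -(β₁ ξ * deriv b ξ) + α₁ ξ * B ξ * deriv d 0 := by
      intro ξ
      have e : pd1 f1 (0, ξ) = deriv
          (fun s => b ξ * c₀ s - (β₁ ξ * deriv b ξ) * c₁ s + (α₁ ξ * B ξ) * d s) 0 := by
        simp only [pd1, hf1]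
      rw [e, Stmt9.deriv_combo (hc₀d 0) (hc₁d 0) (hdd 0), hc₀'0, hc₁'0]
      ring
    have hpd2f1 : ∀ ξ : ℝ, pd2 f1 (0, ξ) = deriv b ξ := by
      intro ξ
      have e : (fun s => f1 (0, s)) = b := by
        funext s
        simp only [hf1]
        rw [hc₀0, hc₁0, hd0]
        ring
      show deriv (fun s => f1 (0, s)) ξ = deriv b ξ
      rw [e]
    have hpd1f2 : ∀ ξ : ℝ, pd1 f2 (ξ, 0) = deriv b ξ := by
      intro ξ
      have e : (fun s => f2 (s, 0)) = b := by
        funext s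
        simp only [hf2]
        rw [hc₀0, hc₁0, hd0]
        ring
      show deriv (fun s => f2 (s, 0)) ξ = deriv b ξ
      rw [e]
    have hpd2f2 : ∀ ξ : ℝ, pd2 f2 (ξ, 0)
        = -(β₂ ξ * deriv b ξ) - α₂ ξ * B ξ * deriv d 0 := by
      intro ξ
      have e : pd2 f2 (ξ, 0) = deriv
          (fun s => b ξ * c₀ s - (β₂ ξ * deriv b ξ) * c₁ s - (α₂ ξ * B ξ) * d s) 0 := by
        simp only [pd2, hf2]
      rw [e, Stmt9.deriv_combo' (hc₀d 0) (hc₁d 0) (hdd 0), hc₀'0, hc₁'0]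
      ring
    -- tangent vectors along the interface agree
    have htan : ∀ ξ ∈ Set.Ioo (0:ℝ) 1, pd2 F1 (0, ξ) = pd1 F2 (ξ, 0) := by
      intro ξ hξ
      have hev : (fun s => F1 (0, s)) =ᶠ[nhds ξ] (fun s => F2 (s, 0)) := by
        filter_upwards [Icc_mem_nhds hξ.1 hξ.2] with s hs
        exact hcompat s hs
      show deriv (fun s => F1 (0, s)) ξ = deriv (fun s => F2 (s, 0)) ξ
      exact hev.deriv_eq
    -- representation of φ by the local inverses
    have hrep1 : ∀ (W : Set (ℝ × ℝ)) (g : ℝ × ℝ → ℝ × ℝ), (∀ z ∈ W, F1 (g z) = z) →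
        (∀ z ∈ W, z ∈ F1 '' square → g z ∈ square) →
        ∀ z ∈ W, z ∈ S1 → φ z = f1 (g z) := by
      intro W g hFg hgsq z hzW hz1
      have h1 : g z ∈ square := hgsq z hzW hz1
      have h2 : φ (F1 (g z)) = f1 (g z) := (hφp (g z) h1).1
      rwa [hFg z hzW] at h2
    have hrep2 : ∀ (W : Set (ℝ × ℝ)) (g : ℝ × ℝ → ℝ × ℝ), (∀ z ∈ W, F2 (g z) = z) →
        (∀ z ∈ W, z ∈ F2 '' square → g z ∈ square) →
        ∀ z ∈ W, z ∈ S2 → φ z = f2 (g z) := by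
      intro W g hFg hgsq z hzW hz2
      have h1 : g z ∈ square := hgsq z hzW hz2
      have h2 : φ (F2 (g z)) = f2 (g z) := (hφp (g z) h1).2
      rwa [hFg z hzW] at h2
    intro y hy
    suffices hca : ContDiffAt ℝ 1 φ y by exact hca.contDiffWithinAt
    have hyU : y ∈ S1 ∪ S2 := hΩsub hy
    by_cases hy1 : y ∈ S1
    · by_cases hy2 : y ∈ S2
      · -- interface case
        obtain ⟨xb, hxbI, hyeq⟩ := hΓ y hy1 hy2
        have hx1sq : ((0:ℝ), xb) ∈ square := hmem1 xb hxbI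
        have hx2sq : (xb, (0:ℝ)) ∈ square := hmem2 xb hxbI
        obtain ⟨W1, g1, hW1o, hyW1, hg1C, hFg1, hg1sq⟩ :=
          Stmt9.patch_local hU1 hsqU1 hF1 hinj1 hjac1' hx1sq
        obtain ⟨W2, g2, hW2o, hyW2, hg2C, hFg2, hg2sq⟩ :=
          Stmt9.patch_local hU2 hsqU2 hF2 hinj2 hjac2' hx2sq
        rw [← hyeq] at hyW1
        have hyeq2 : y = F2 (xb, 0) := by rw [hyeq, hcompat xb hxbI]
        rw [← hyeq2] at hyW2
        set W := W1 ∩ W2 ∩ Ω with hWdef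
        have hWo : IsOpen W := (hW1o.inter hW2o).inter hΩopen
        have hyW : y ∈ W := ⟨⟨hyW1, hyW2⟩, hy⟩
        have hWsub : W ⊆ S1 ∪ S2 := fun z hz => hΩsub hz.2
        have hhC : ContDiffOn ℝ 1 (f1 ∘ g1) W :=
          hf1s.comp_contDiffOn (hg1C.mono (fun z hz => hz.1.1))
        have hkC : ContDiffOn ℝ 1 (f2 ∘ g2) W :=
          hf2s.comp_contDiffOn (hg2C.mono (fun z hz => hz.1.2))
        -- derivative matching at interior interface points
        have hcore : ∀ ξ ∈ Set.Ioo (0:ℝ) 1, F1 (0, ξ) ∈ W →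
            fderiv ℝ (f1 ∘ g1) (F1 (0, ξ)) = fderiv ℝ (f2 ∘ g2) (F1 (0, ξ)) := by
          intro ξ hξo hzW
          have hξI : ξ ∈ Set.Icc (0:ℝ) 1 := Set.Ioo_subset_Icc_self hξo
          set z := F1 (0, ξ) with hzdef
          have hsq1 : ((0:ℝ), ξ) ∈ square := hmem1 ξ hξI
          have hsq2 : (ξ, (0:ℝ)) ∈ square := hmem2 ξ hξI
          have hz1 : z ∈ S1 := ⟨(0, ξ), hsq1, rfl⟩
          have hz2 : z ∈ S2 := ⟨(ξ, 0), hsq2, (hcompat ξ hξI).symm⟩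
          have hg1z : g1 z = (0, ξ) :=
            hinj1 (hg1sq z hzW.1.1 hz1) hsq1 (by rw [hFg1 z hzW.1.1])
          have hg2z : g2 z = (ξ, 0) :=
            hinj2 (hg2sq z hzW.1.2 hz2) hsq2
              (by rw [hFg2 z hzW.1.2, hzdef, hcompat ξ hξI])
          have hFd1 : DifferentiableAt ℝ F1 (g1 z) := by
            rw [hg1z]
            exact (hF1.contDiffAt (hU1.mem_nhds (hsqU1 hsq1))).differentiableAt one_ne_zero
          have hFd2 : DifferentiableAt ℝ F2 (g2 z) := by
            rw [hg2z]
            exact (hF2.contDiffAt (hU2.mem_nhds (hsqU2 hsq2))).differentiableAt one_ne_zero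
          have hdet1 : det2 (pd1 F1 (g1 z)) (pd2 F1 (g1 z)) ≠ 0 := by
            rw [hg1z]; exact hjac1' _ hsq1
          have hdet2 : det2 (pd1 F2 (g2 z)) (pd2 F2 (g2 z)) ≠ 0 := by
            rw [hg2z]; exact hjac2' _ hsq2
          have hD1 := Stmt9.fderiv_comp_localInv hf1s hW1o hg1C hFg1 hzW.1.1 hFd1 hdet1
          have hD2 := Stmt9.fderiv_comp_localInv hf2s hW2o hg2C hFg2 hzW.1.2 hFd2 hdet2
          rw [hg1z] at hD1
          rw [hg2z] at hD2
          have htv : pd1 F2 (ξ, 0) = pd2 F1 (0, ξ) := (htan ξ hξo).symm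
          rw [htv] at hD2
          have ha2 := hα₂ne ξ hξI
          have hudec : pd1 F1 (0, ξ) = (-(α₁ ξ) / α₂ ξ) • pd2 F2 (ξ, 0)
              + (-(β ξ) / α₂ ξ) • pd2 F1 (0, ξ) := by
            have hglue := hglueF ξ hξI
            have h2 : pd1 F1 (0, ξ) = (α₂ ξ)⁻¹ • (α₂ ξ • pd1 F1 (0, ξ)) := by
              rw [smul_smul, inv_mul_cancel₀ ha2, one_smul]
            have h3 : α₂ ξ • pd1 F1 (0, ξ)
                = -(α₁ ξ • pd2 F2 (ξ, 0)) - β ξ • pd2 F1 (0, ξ) := by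
              linear_combination (norm := module) hglue
            rw [h2, h3]
            match_scalars <;> field_simp
          apply Stmt9.clm_ext_of_basis (hjac1' _ hsq1)
          · rw [hD1.1, hudec, map_add, map_smul, map_smul, hD2.1, hD2.2]
            rw [hpd1f1 ξ, hpd2f2 ξ, hpd1f2 ξ]
            simp only [smul_eq_mul, hβ]
            field_simp
            ring
          · rw [hD1.2, hD2.1, hpd2f1 ξ, hpd1f2 ξ]
        -- matching everywhere on the interface inside W
        have hmatchD : ∀ z ∈ W ∩ (S1 ∩ S2),
            (f1 ∘ g1) z = (f2 ∘ g2) z ∧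
              fderiv ℝ (f1 ∘ g1) z = fderiv ℝ (f2 ∘ g2) z := by
          rintro z ⟨hzW, hz1, hz2⟩
          constructor
          · have e1 : φ z = f1 (g1 z) := hrep1 W1 g1 hFg1 hg1sq z hzW.1.1 hz1
            have e2 : φ z = f2 (g2 z) := hrep2 W2 g2 hFg2 hg2sq z hzW.1.2 hz2
            exact e1.symm.trans e2
          · obtain ⟨ξ, hξI, hzeq⟩ := hΓ z hz1 hz2
            by_cases hξo : ξ ∈ Set.Ioo (0:ℝ) 1
            · rw [hzeq]
              exact hcore ξ hξo (by rw [← hzeq]; exact hzW)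
            · -- endpoints of the interface, by continuity
              have hzW' : F1 (0, ξ) ∈ W := by rw [← hzeq]; exact hzW
              rw [hzeq]
              have hcontD : ContinuousAt
                  (fun w => fderiv ℝ (f1 ∘ g1) w - fderiv ℝ (f2 ∘ g2) w) (F1 (0, ξ)) := by
                have c1 := (hhC.continuousOn_fderiv_of_isOpen hWo le_rfl).continuousAt
                  (hWo.mem_nhds hzW')
                have c2 := (hkC.continuousOn_fderiv_of_isOpen hWo le_rfl).continuousAt
                  (hWo.mem_nhds hzW')
                exact c1.sub c2
              have hγc : ContinuousAt (fun s : ℝ => F1 (0, s)) ξ := by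
                have hc : ContinuousAt F1 (0, ξ) :=
                  (hF1.contDiffAt (hU1.mem_nhds (hsqU1 (hmem1 ξ hξI)))).continuousAt
                exact hc.comp (by fun_prop)
              haveI hne : (nhdsWithin ξ (Set.Ioo (0:ℝ) 1)).NeBot := by
                rw [← mem_closure_iff_nhdsWithin_neBot,
                  closure_Ioo (by norm_num : (0:ℝ) ≠ 1)]
                exact hξI
              have hγ' : Filter.Tendsto (fun s : ℝ => F1 (0, s))
                  (nhdsWithin ξ (Set.Ioo (0:ℝ) 1)) (nhds (F1 (0, ξ))) :=
                hγc.tendsto.mono_left nhdsWithin_le_nhds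
              have ht1 : Filter.Tendsto
                  (fun s => fderiv ℝ (f1 ∘ g1) (F1 (0, s)) - fderiv ℝ (f2 ∘ g2) (F1 (0, s)))
                  (nhdsWithin ξ (Set.Ioo (0:ℝ) 1))
                  (nhds (fderiv ℝ (f1 ∘ g1) (F1 (0, ξ)) - fderiv ℝ (f2 ∘ g2) (F1 (0, ξ)))) :=
                hcontD.tendsto.comp hγ'
              have hWev : ∀ᶠ s in nhdsWithin ξ (Set.Ioo (0:ℝ) 1), F1 (0, s) ∈ W :=
                (hγ'.eventually (hWo.eventually_mem hzW'))
              have ht2 : Filter.Tendsto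
                  (fun s => fderiv ℝ (f1 ∘ g1) (F1 (0, s)) - fderiv ℝ (f2 ∘ g2) (F1 (0, s)))
                  (nhdsWithin ξ (Set.Ioo (0:ℝ) 1)) (nhds 0) := by
                have hev : (fun s => fderiv ℝ (f1 ∘ g1) (F1 (0, s))
                    - fderiv ℝ (f2 ∘ g2) (F1 (0, s)))
                    =ᶠ[nhdsWithin ξ (Set.Ioo (0:ℝ) 1)]
                    (fun _ => (0 : (ℝ × ℝ) →L[ℝ] ℝ)) := by
                  filter_upwards [hWev, self_mem_nhdsWithin] with s h1 h2
                  rw [hcore s h2 h1, sub_self]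
                exact hev.tendsto
              have hzero := tendsto_nhds_unique ht1 ht2
              exact sub_eq_zero.mp hzero
        have hglued : ContDiffOn ℝ 1 φ W := by
          apply Stmt9.glueC1 hS1cl hS2cl hWo hWsub hhC hkC ?_ ?_ hmatchD
          · rintro z ⟨hzW, hz1⟩
            exact hrep1 W1 g1 hFg1 hg1sq z hzW.1.1 hz1
          · rintro z ⟨hzW, hz2⟩
            exact hrep2 W2 g2 hFg2 hg2sq z hzW.1.2 hz2
        exact hglued.contDiffAt (hWo.mem_nhds hyW)
      · -- y in the first patch only
        obtain ⟨xb, hxb, hxy⟩ := hy1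
        obtain ⟨W1, g1, hW1o, hyW1, hg1C, hFg1, hg1sq⟩ :=
          Stmt9.patch_local hU1 hsqU1 hF1 hinj1 hjac1' hxb
        rw [hxy] at hyW1
        set W := W1 ∩ Ω ∩ S2ᶜ with hWdef
        have hWo : IsOpen W := (hW1o.inter hΩopen).inter hS2cl.isOpen_compl
        have hyW : y ∈ W := ⟨⟨hyW1, hy⟩, hy2⟩
        have hWcd : ContDiffOn ℝ 1 φ W := by
          apply ContDiffOn.congr (hf1s.comp_contDiffOn (hg1C.mono (fun z hz => hz.1.1)))
          rintro z ⟨⟨hzW1, hzΩ⟩, hz2⟩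
          exact hrep1 W1 g1 hFg1 hg1sq z hzW1 ((hΩsub hzΩ).resolve_right hz2)
        exact hWcd.contDiffAt (hWo.mem_nhds hyW)
    · -- y in the second patch only
      have hy2 : y ∈ S2 := hyU.resolve_left hy1
      obtain ⟨xb, hxb, hxy⟩ := hy2
      obtain ⟨W2, g2, hW2o, hyW2, hg2C, hFg2, hg2sq⟩ :=
        Stmt9.patch_local hU2 hsqU2 hF2 hinj2 hjac2' hxb
      rw [hxy] at hyW2
      set W := W2 ∩ Ω ∩ S1ᶜ with hWdef
      have hWo : IsOpen W := (hW2o.inter hΩopen).inter hS1cl.isOpen_compl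
      have hyW : y ∈ W := ⟨⟨hyW2, hy⟩, hy1⟩
      have hWcd : ContDiffOn ℝ 1 φ W := by
        apply ContDiffOn.congr (hf2s.comp_contDiffOn (hg2C.mono (fun z hz => hz.1.1)))
        rintro z ⟨⟨hzW2, hzΩ⟩, hz1⟩
        exact hrep2 W2 g2 hFg2 hg2sq z hzW2 ((hΩsub hzΩ).resolve_left hz1)
      exact hWcd.contDiffAt (hWo.mem_nhds hyW)
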